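/- Let n ≥ 1 and N ≥ 1. Let Σ̂₀,…,Σ̂_N be symmetric positive semidefinite n × n real matrices and S₀,…,S_{N−1} be n × n real matrices such that for every i = 0,…,N−1 the 2n × 2n block matrix [[Σ̂_i, S_i],[S_iᵀ, Σ̂_{i+1}]] is positive semidefinite. Then there exists a symmetric positive semidefinite n(N+1) × n(N+1) real matrix Σ̂, regarded as an (N+1) × (N+1) array of n × n blocks, whose (i,i) block equals Σ̂_i for every i = 0,…,N and whose (i,i+1) block equals S_i for every i = 0,…,N−1. -/

import Mathlib

open Matrix

noncomputable section

open Finset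


local notation "⟪" x ", " y "⟫" => @inner ℝ _ _ x y

/-- Alignment lemma: two tuples with identical Gram matrices are related by a linear isometry. -/
lemma align_aux {V : Type*} [NormedAddCommGroup V] [InnerProductSpace ℝ V]
    [FiniteDimensional ℝ V] {ι : Type*} [Fintype ι] [DecidableEq ι] (u v : ι → V)
    (h : ∀ k l, ⟪u k, u l⟫ = ⟪v k, v l⟫) :
    ∃ Q : V →ₗᵢ[ℝ] V, ∀ k, Q (u k) = v k := by
  set gu : (ι → ℝ) →ₗ[ℝ] V := Fintype.linearCombination ℝ u with hgu
  set gv : (ι → ℝ) →ₗ[ℝ] V := Fintype.linearCombination ℝ v with hgv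
  have key : ∀ c, ⟪gu c, gu c⟫ = ⟪gv c, gv c⟫ := by
    intro c
    simp only [hgu, hgv, Fintype.linearCombination_apply, sum_inner, inner_sum,
      real_inner_smul_left, real_inner_smul_right, h]
  have hker : LinearMap.ker gu ≤ LinearMap.ker gv := by
    intro c hc
    rw [LinearMap.mem_ker] at hc ⊢
    have := key c
    rw [hc, inner_zero_left] at this
    exact (inner_self_eq_zero.mp this.symm)
  have hnorm : ∀ c, ‖gu c‖ = ‖gv c‖ := by
    intro c
    have h1 := key c
    rw [real_inner_self_eq_norm_sq, real_inner_self_eq_norm_sq] at h1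
    exact (sq_eq_sq₀ (norm_nonneg _) (norm_nonneg _)).mp h1
  -- factor `gv` through the range of `gu` as a linear isometry
  set f0 : ((ι → ℝ) ⧸ LinearMap.ker gu) →ₗ[ℝ] V := (LinearMap.ker gu).liftQ gv hker with hf0
  set e := gu.quotKerEquivRange with he
  set f : LinearMap.range gu →ₗ[ℝ] V := f0 ∘ₗ e.symm.toLinearMap with hf
  have hfgu : ∀ c : ι → ℝ, f ⟨gu c, LinearMap.mem_range_self gu c⟩ = gv c := by
    intro c
    have h2 : e.symm ⟨gu c, LinearMap.mem_range_self gu c⟩ = Submodule.Quotient.mk c := by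
      rw [he]; exact gu.quotKerEquivRange_symm_apply_image c (LinearMap.mem_range_self gu c)
    simp [hf, h2, hf0, Submodule.liftQ_apply]
  have fnorm : ∀ s : LinearMap.range gu, ‖f s‖ = ‖s‖ := by
    rintro ⟨s, c, rfl⟩
    rw [hfgu c]
    exact (hnorm c).symm
  set Li : LinearMap.range gu →ₗᵢ[ℝ] V := ⟨f, fnorm⟩ with hLi
  refine ⟨Li.extend, fun k => ?_⟩
  have hmem : u k = gu (Pi.single k 1) := by
    simp [hgu, Fintype.linearCombination_apply, Pi.single_apply, ite_smul]
  have : u k = ((⟨gu (Pi.single k 1), LinearMap.mem_range_self gu _⟩ : LinearMap.range gu) : V) := hmem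
  rw [this, Li.extend_apply]
  show f _ = v k
  rw [hfgu]
  simp [hgv, Fintype.linearCombination_apply, Pi.single_apply, ite_smul]

/-- A Gram matrix is positive semidefinite. -/
lemma gram_posSemidef {V : Type*} [NormedAddCommGroup V] [InnerProductSpace ℝ V]
    {ι : Type*} [Fintype ι] (T : ι → V) :
    (Matrix.of fun p q : ι => ⟪T p, T q⟫).PosSemidef := by
  rw [Matrix.posSemidef_iff_dotProduct_mulVec]
  constructor
  · ext p q
    simp [Matrix.conjTranspose_apply, real_inner_comm]
  · intro x
    have : dotProduct (star x) ((Matrix.of fun p q : ι => ⟪T p, T q⟫) *ᵥ x)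
        = ⟪∑ p, x p • T p, ∑ q, x q • T q⟫ := by
      simp only [dotProduct, Matrix.mulVec, dotProduct, Matrix.of_apply, sum_inner, inner_sum,
        real_inner_smul_left, real_inner_smul_right, Pi.star_apply, star_trivial]
      congr 1; ext p; rw [Finset.mul_sum]; congr 1; ext q; rw [real_inner_comm]; ring
    rw [this]
    exact real_inner_self_nonneg

/-- Given symmetric PSD `n×n` matrices `Σ̂₀,…,Σ̂_N` and matrices `S₀,…,S_{N−1}` such that
each block matrix `[[Σ̂ᵢ, Sᵢ],[Sᵢᵀ, Σ̂ᵢ₊₁]]` is PSD, there exists a PSD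
`n(N+1) × n(N+1)` matrix whose `(i,i)` block is `Σ̂ᵢ` and whose `(i,i+1)` block is
`Sᵢ`. -/
theorem stmt15 (n N : ℕ) (hn : 1 ≤ n) (hN : 1 ≤ N)
    (Sh : Fin (N + 1) → Matrix (Fin n) (Fin n) ℝ)
    (S : Fin N → Matrix (Fin n) (Fin n) ℝ)
    (hSh : ∀ i, (Sh i).PosSemidef)
    (hblock : ∀ i : Fin N,
      (Matrix.fromBlocks (Sh i.castSucc) (S i) (S i)ᵀ (Sh i.succ)).PosSemidef) :
    ∃ M : Matrix (Fin (N + 1) × Fin n) (Fin (N + 1) × Fin n) ℝ,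
      M.PosSemidef ∧
      (∀ (i : Fin (N + 1)) (k l : Fin n), M (i, k) (i, l) = Sh i k l) ∧
      (∀ (i : Fin N) (k l : Fin n), M (i.castSucc, k) (i.succ, l) = S i k l) := by

  set V := EuclideanSpace ℝ (Fin n ⊕ Fin n) with hV
  open scoped MatrixOrder in choose C hC using fun i => CStarAlgebra.nonneg_iff_eq_star_mul_self.mp (hblock i).nonneg
  set a : Fin N → Fin n → V := fun i k => (WithLp.equiv 2 _).symm fun r => C i r (Sum.inl k)
    with ha
  set b : Fin N → Fin n → V := fun i k => (WithLp.equiv 2 _).symm fun r => C i r (Sum.inr k)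
    with hb
  have hab : ∀ (i : Fin N) (x y : Fin n ⊕ Fin n),
      ⟪((WithLp.equiv 2 _).symm fun r => C i r x : V),
        ((WithLp.equiv 2 _).symm fun r => C i r y : V)⟫
        = Matrix.fromBlocks (Sh i.castSucc) (S i) (S i)ᵀ (Sh i.succ) x y := by
    intro i x y
    rw [hC i]
    simp [PiLp.inner_apply, RCLike.inner_apply, Matrix.mul_apply, Matrix.star_eq_conjTranspose, Matrix.conjTranspose_apply, mul_comm]
  have haa : ∀ (i : Fin N) (k l : Fin n), ⟪a i k, a i l⟫ = Sh i.castSucc k l := fun i k l =>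
    hab i (Sum.inl k) (Sum.inl l)
  have habS : ∀ (i : Fin N) (k l : Fin n), ⟪a i k, b i l⟫ = S i k l := fun i k l =>
    hab i (Sum.inl k) (Sum.inr l)
  have hbb : ∀ (i : Fin N) (k l : Fin n), ⟪b i k, b i l⟫ = Sh i.succ k l := fun i k l =>
    hab i (Sum.inr k) (Sum.inr l)
  have claim : ∀ m : ℕ, ∀ hm : m ≤ N, ∃ T : Fin (m+1) → Fin n → V,
      (∀ (j : Fin (m+1)) (k l : Fin n),
        ⟪T j k, T j l⟫ = Sh ⟨j.1, lt_of_lt_of_le j.isLt (by omega)⟩ k l) ∧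
      (∀ (j : Fin m) (k l : Fin n),
        ⟪T j.castSucc k, T j.succ l⟫ = S ⟨j.1, lt_of_lt_of_le j.isLt hm⟩ k l) := by
    intro m
    induction m with
    | zero =>
      intro _
      refine ⟨fun _ => a ⟨0, hN⟩, fun j k l => ?_, fun j => absurd j.isLt (by omega)⟩
      have hj : (j : ℕ) = 0 := by omega
      have := haa ⟨0, hN⟩ k l
      rw [this]
      congr 1
      ext
      simp [hj]
    | succ m ih =>
      intro hm
      obtain ⟨T, hdiag, hcross⟩ := ih (Nat.le_of_succ_le hm)
      set i : Fin N := ⟨m, hm⟩ with hi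
      have hgram : ∀ k l : Fin n, ⟪a i k, a i l⟫ = ⟪T (Fin.last m) k, T (Fin.last m) l⟫ := by
        intro k l
        rw [haa i k l, hdiag (Fin.last m) k l]
        congr 1
      obtain ⟨Q, hQ⟩ := align_aux (a i) (T (Fin.last m)) hgram
      refine ⟨Fin.snoc T (fun k => Q (b i k)), fun j k l => ?_, fun j k l => ?_⟩
      · induction j using Fin.lastCases with
        | last =>
          simp only [Fin.snoc_last]
          rw [Q.inner_map_map, hbb i k l]
          congr 1
        | cast j' =>
          simp only [Fin.snoc_castSucc]
          rw [hdiag j' k l]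
          congr 1
      · induction j using Fin.lastCases with
        | last =>
          rw [Fin.succ_last, Fin.snoc_castSucc, Fin.snoc_last, ← hQ k, Q.inner_map_map,
            habS i k l]
          congr 1
        | cast j' =>
          rw [Fin.succ_castSucc, Fin.snoc_castSucc, Fin.snoc_castSucc]
          rw [hcross j' k l]
          congr 1
  obtain ⟨T, hdiag, hcross⟩ := claim N le_rfl
  refine ⟨Matrix.of fun p q : Fin (N+1) × Fin n => ⟪T p.1 p.2, T q.1 q.2⟫,
    gram_posSemidef _, fun i k l => ?_, fun i k l => ?_⟩
  · rw [Matrix.of_apply]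
    rw [hdiag i k l]
  · rw [Matrix.of_apply]
    have := hcross i k l
    rw [this]
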